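/- Let z₁, ..., z_n : Fin L → ℝ be non-constant logit vectors with ground-truth labels S₁, ..., S_n, and suppose (1/L)∑_i ∑_l (z_i)_l < ∑_i (z_i)_{S_i} < ∑_i max_l (z_i)_l. Then the function F(α) = ∑_i ∑_l (z_i)_l · softmax(α·z_i)_l is strictly increasing on [0, ∞), F(0) = (1/L)∑_i ∑_l (z_i)_l, lim_{α→∞} F(α) = ∑_i max_l (z_i)_l, and there exists a unique α* > 0 with F(α*) = ∑_i (z_i)_{S_i}. This α* is the unique minimizer over α ≥ 0 of the aggregated NLL −∑_i log softmax(α·z_i)_{S_i}. -/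

import Mathlib

open Real Finset Filter

noncomputable def softmax {L : ℕ} (v : Fin L → ℝ) (l : Fin L) : ℝ :=
  Real.exp (v l) / ∑ j, Real.exp (v j)

noncomputable def entropy {L : ℕ} (q : Fin L → ℝ) : ℝ :=
  -∑ l, q l * Real.log (q l)

section GTShelpers
variable {L : ℕ} (v : Fin L → ℝ)

lemma GTS_Zpos (hL : 0 < L) (α : ℝ) : 0 < ∑ j, Real.exp (α * v j) :=
  Finset.sum_pos (fun _ _ => Real.exp_pos _) ⟨⟨0, hL⟩, Finset.mem_univ _⟩

lemma GTS_Fv_eq (α : ℝ) :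
    ∑ l, v l * softmax (fun j => α * v j) l
      = (∑ l, v l * Real.exp (α * v l)) / (∑ j, Real.exp (α * v j)) := by
  rw [Finset.sum_div]
  refine Finset.sum_congr rfl fun l _ => ?_
  simp [softmax, mul_div_assoc]

lemma GTS_pair_pos {α β : ℝ} (hαβ : α < β) {l m : Fin L} (h : v l ≠ v m) :
    0 < (v l - v m) * (Real.exp (β * v l + α * v m) - Real.exp (α * v l + β * v m)) := by
  rcases lt_or_gt_of_ne h with h | h
  · apply mul_pos_of_neg_of_neg (by linarith)
    simp only [sub_neg, Real.exp_lt_exp]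
    nlinarith
  · apply mul_pos (by linarith)
    simp only [sub_pos, Real.exp_lt_exp]
    nlinarith

lemma GTS_pair_nonneg {α β : ℝ} (hαβ : α < β) (l m : Fin L) :
    0 ≤ (v l - v m) * (Real.exp (β * v l + α * v m) - Real.exp (α * v l + β * v m)) := by
  rcases eq_or_ne (v l) (v m) with h | h
  · simp [h]
  · exact (GTS_pair_pos v hαβ h).le

lemma GTS_mono_core {α β : ℝ} (hαβ : α < β) (hnc : ∃ l m, v l ≠ v m) :
    (∑ l, v l * Real.exp (α * v l)) * (∑ j, Real.exp (β * v j))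
      < (∑ l, v l * Real.exp (β * v l)) * (∑ j, Real.exp (α * v j)) := by
  have key : 0 < ∑ l, ∑ m, (v l - v m) *
      (Real.exp (β * v l + α * v m) - Real.exp (α * v l + β * v m)) := by
    obtain ⟨l0, m0, hne⟩ := hnc
    refine Finset.sum_pos' (fun l _ => Finset.sum_nonneg fun m _ => GTS_pair_nonneg v hαβ l m)
      ⟨l0, Finset.mem_univ _, Finset.sum_pos' (fun m _ => GTS_pair_nonneg v hαβ l0 m)
        ⟨m0, Finset.mem_univ _, GTS_pair_pos v hαβ hne⟩⟩
  have h1 : ∀ (γ δ : ℝ), (∑ l, v l * Real.exp (γ * v l)) * (∑ j, Real.exp (δ * v j))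
      = ∑ l, ∑ m, v l * Real.exp (γ * v l + δ * v m) := by
    intro γ δ
    rw [Finset.sum_mul_sum]
    exact Finset.sum_congr rfl fun l _ => Finset.sum_congr rfl fun m _ => by
      rw [Real.exp_add]; ring
  have h2 : ∀ (γ δ : ℝ), (∑ l, v l * Real.exp (γ * v l)) * (∑ j, Real.exp (δ * v j))
      = ∑ l, ∑ m, v m * Real.exp (δ * v l + γ * v m) := by
    intro γ δ
    rw [h1, Finset.sum_comm]
    exact Finset.sum_congr rfl fun l _ => Finset.sum_congr rfl fun m _ => by
      rw [add_comm]
  have split : ∑ l, ∑ m, (v l - v m) *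
      (Real.exp (β * v l + α * v m) - Real.exp (α * v l + β * v m))
      = (∑ l, ∑ m, v l * Real.exp (β * v l + α * v m))
        - (∑ l, ∑ m, v l * Real.exp (α * v l + β * v m))
        - (∑ l, ∑ m, v m * Real.exp (β * v l + α * v m))
        + (∑ l, ∑ m, v m * Real.exp (α * v l + β * v m)) := by
    simp only [← Finset.sum_sub_distrib, ← Finset.sum_add_distrib]
    exact Finset.sum_congr rfl fun l _ => Finset.sum_congr rfl fun m _ => by ring
  rw [split, ← h1 β α, ← h1 α β, ← h2 α β, ← h2 β α] at key
  linarith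

lemma GTS_Fv_strictMono (hL : 0 < L) (hnc : ∃ l m, v l ≠ v m) :
    StrictMono (fun α : ℝ => ∑ l, v l * softmax (fun j => α * v j) l) := by
  intro α β hαβ
  simp only [GTS_Fv_eq]
  rw [div_lt_div_iff₀ (GTS_Zpos v hL α) (GTS_Zpos v hL β)]
  exact GTS_mono_core v hαβ hnc

lemma GTS_Fv_tendsto (hL : 0 < L) :
    Tendsto (fun α : ℝ => (∑ l, v l * Real.exp (α * v l)) / (∑ j, Real.exp (α * v j)))
      atTop (nhds (Finset.univ.sup' ⟨⟨0, hL⟩, Finset.mem_univ _⟩ v)) := by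
  have hne : (Finset.univ : Finset (Fin L)).Nonempty := ⟨⟨0, hL⟩, Finset.mem_univ _⟩
  set M := Finset.univ.sup' hne v with hM
  have hrw : ∀ α : ℝ, (∑ l, v l * Real.exp (α * v l)) / (∑ j, Real.exp (α * v j))
      = (∑ l, v l * Real.exp (α * (v l - M))) / (∑ j, Real.exp (α * (v j - M))) := by
    intro α
    have e1 : ∀ l, Real.exp (α * (v l - M)) = Real.exp (α * v l) * Real.exp (-(α * M)) := by
      intro l; rw [← Real.exp_add]; ring_nf
    simp only [e1, ← mul_assoc]
    rw [← Finset.sum_mul, ← Finset.sum_mul,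
      mul_div_mul_right _ _ (Real.exp_ne_zero _)]
  simp only [hrw]
  have hterm : ∀ l : Fin L, Tendsto (fun α : ℝ => Real.exp (α * (v l - M))) atTop
      (nhds (if v l = M then 1 else 0)) := by
    intro l
    rcases eq_or_ne (v l) M with h | h
    · simp only [h, sub_self, mul_zero, Real.exp_zero, if_true]
      exact tendsto_const_nhds
    · simp only [h, if_false]
      have hlt : v l - M < 0 := sub_neg.2 (lt_of_le_of_ne (Finset.le_sup' v (Finset.mem_univ l)) h)
      exact Real.tendsto_exp_atBot.comp ((tendsto_mul_const_atBot_of_neg hlt).2 tendsto_id)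
  have hnum : Tendsto (fun α : ℝ => ∑ l, v l * Real.exp (α * (v l - M))) atTop
      (nhds (∑ l, v l * (if v l = M then 1 else 0))) :=
    tendsto_finset_sum _ fun l _ => (hterm l).const_mul _
  have hden : Tendsto (fun α : ℝ => ∑ j, Real.exp (α * (v j - M))) atTop
      (nhds (∑ l, (if v l = M then (1:ℝ) else 0))) :=
    tendsto_finset_sum _ fun l _ => hterm l
  obtain ⟨l0, _, hl0⟩ := Finset.exists_mem_eq_sup' hne v
  have hD : 0 < ∑ l, (if v l = M then (1:ℝ) else 0) :=
    Finset.sum_pos' (fun l _ => by positivity)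
      ⟨l0, Finset.mem_univ _, by simp [hl0.symm, hM]⟩
  have hN : (∑ l, v l * (if v l = M then (1:ℝ) else 0))
      = M * ∑ l, (if v l = M then (1:ℝ) else 0) := by
    rw [Finset.mul_sum]
    exact Finset.sum_congr rfl fun l _ => by split_ifs with h <;> simp [h]
  have := hnum.div hden hD.ne'
  rwa [hN, mul_div_assoc, div_self hD.ne', mul_one] at this

lemma GTS_Zderiv (α : ℝ) :
    HasDerivAt (fun α : ℝ => ∑ j, Real.exp (α * v j))
      (∑ j, v j * Real.exp (α * v j)) α := by
  refine HasDerivAt.fun_sum fun j _ => ?_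
  have := ((hasDerivAt_id α).mul_const (v j)).exp
  simpa [mul_comm] using this

lemma GTS_contE : Continuous fun α : ℝ => ∑ l, v l * Real.exp (α * v l) := by
  continuity

lemma GTS_contZ : Continuous fun α : ℝ => ∑ j, Real.exp (α * v j) := by
  continuity

end GTShelpers

theorem global_temperature_scaling {n L : ℕ} (hL : 0 < L)
    (z : Fin n → Fin L → ℝ) (S : Fin n → Fin L)
    (hnc : ∀ i, ¬ ∃ c, ∀ l, z i l = c)
    (h1 : (1 / (L : ℝ)) * ∑ i, ∑ l, z i l < ∑ i, z i (S i))
    (h2 : ∑ i, z i (S i) <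
      ∑ i, Finset.univ.sup' ⟨⟨0, hL⟩, Finset.mem_univ _⟩ (z i)) :
    StrictMonoOn (fun α : ℝ => ∑ i, ∑ l, z i l * softmax (fun j => α * z i j) l)
      (Set.Ici 0) ∧
    (∑ i, ∑ l, z i l * softmax (fun j => (0 : ℝ) * z i j) l) =
      (1 / (L : ℝ)) * ∑ i, ∑ l, z i l ∧
    Tendsto (fun α : ℝ => ∑ i, ∑ l, z i l * softmax (fun j => α * z i j) l) atTop
      (nhds (∑ i, Finset.univ.sup' ⟨⟨0, hL⟩, Finset.mem_univ _⟩ (z i))) ∧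
    ∃! αs : ℝ, 0 < αs ∧
      (∑ i, ∑ l, z i l * softmax (fun j => αs * z i j) l) = ∑ i, z i (S i) ∧
      ∀ α : ℝ, 0 ≤ α →
        (-∑ i, Real.log (softmax (fun j => αs * z i j) (S i))) ≤
          (-∑ i, Real.log (softmax (fun j => α * z i j) (S i))) := by
  -- basic setup
  have hnei : ∀ i, ∃ l m, z i l ≠ z i m := by
    intro i
    have := hnc i
    push_neg at this
    obtain ⟨l, hl⟩ := this (z i ⟨0, hL⟩)
    exact ⟨l, ⟨0, hL⟩, hl⟩
  have hn : 0 < n := by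
    rcases Nat.eq_zero_or_pos n with h | h
    · subst h; simp at h1
    · exact h
  set F : ℝ → ℝ := fun α => ∑ i, ∑ l, z i l * softmax (fun j => α * z i j) l with hF
  set T : ℝ := ∑ i, z i (S i) with hT
  -- strict monotonicity of F (globally)
  have Fmono : StrictMono F := by
    intro a b hab
    exact Finset.sum_lt_sum_of_nonempty ⟨⟨0, hn⟩, Finset.mem_univ _⟩
      fun i _ => GTS_Fv_strictMono (z i) hL (hnei i) hab
  -- value at 0
  have part2 : F 0 = (1 / (L : ℝ)) * ∑ i, ∑ l, z i l := by
    have : ∀ i : Fin n, ∑ l, z i l * softmax (fun j => (0:ℝ) * z i j) l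
        = (1 / (L : ℝ)) * ∑ l, z i l := by
      intro i
      have hs : ∀ l : Fin L, softmax (fun j => (0:ℝ) * z i j) l = 1 / (L : ℝ) := by
        intro l
        simp [softmax]
      simp only [hs]
      rw [← Finset.sum_mul, mul_comm]
    simp only [hF, this, ← Finset.mul_sum]
  -- limit
  have part3 : Tendsto F atTop
      (nhds (∑ i, Finset.univ.sup' ⟨⟨0, hL⟩, Finset.mem_univ _⟩ (z i))) := by
    have : F = fun α => ∑ i, (∑ l, z i l * Real.exp (α * z i l)) / (∑ j, Real.exp (α * z i j)) := by
      funext α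
      exact Finset.sum_congr rfl fun i _ => GTS_Fv_eq (z i) α
    rw [this]
    exact tendsto_finset_sum _ fun i _ => GTS_Fv_tendsto (z i) hL
  -- continuity of F
  have Fcont : Continuous F := by
    have : F = fun α => ∑ i, (∑ l, z i l * Real.exp (α * z i l)) / (∑ j, Real.exp (α * z i j)) := by
      funext α
      exact Finset.sum_congr rfl fun i _ => GTS_Fv_eq (z i) α
    rw [this]
    exact continuous_finset_sum _ fun i _ =>
      (GTS_contE (z i)).div (GTS_contZ (z i)) fun α => (GTS_Zpos (z i) hL α).ne'
  refine ⟨Fmono.strictMonoOn _, part2, part3, ?_⟩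
  -- existence of the crossing point via IVT
  have hF0 : F 0 < T := by rw [part2]; exact h1
  have hev : ∀ᶠ α in atTop, T < F α := part3.eventually (eventually_gt_nhds h2)
  obtain ⟨α₁, hα₁ge, hα₁⟩ := (eventually_ge_atTop (0:ℝ)).and hev |>.exists
  obtain ⟨αs, hmem, hFαs⟩ := intermediate_value_Icc hα₁ge Fcont.continuousOn ⟨hF0.le, hα₁.le⟩
  have hαs_pos : 0 < αs := by
    rcases lt_or_eq_of_le hmem.1 with h | h
    · exact h
    · exfalso; rw [← h] at hFαs; exact absurd hFαs hF0.ne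
  -- NLL function
  set N : ℝ → ℝ := fun α => ∑ i, (Real.log (∑ j, Real.exp (α * z i j)) - α * z i (S i)) with hNdef
  have hNLLeq : ∀ α : ℝ, (-∑ i, Real.log (softmax (fun j => α * z i j) (S i))) = N α := by
    intro α
    rw [hNdef, ← Finset.sum_neg_distrib]
    refine Finset.sum_congr rfl fun i _ => ?_
    rw [softmax, Real.log_div (Real.exp_ne_zero _) (GTS_Zpos (z i) hL α).ne', Real.log_exp]
    ring
  have hNderiv : ∀ α : ℝ, HasDerivAt N (F α - T) α := by
    intro α
    have : F α - T = ∑ i, ((∑ l, z i l * Real.exp (α * z i l)) / (∑ j, Real.exp (α * z i j))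
        - z i (S i)) := by
      rw [Finset.sum_sub_distrib, hT, hF]
      congr 1
      exact Finset.sum_congr rfl fun i _ => GTS_Fv_eq (z i) α
    rw [this]
    refine HasDerivAt.fun_sum fun i _ => ?_
    have hlog := (GTS_Zderiv (z i) α).log (GTS_Zpos (z i) hL α).ne'
    exact hlog.sub (hasDerivAt_mul_const (z i (S i)))
  have hNderiv' : ∀ α : ℝ, deriv N α = F α - T := fun α => (hNderiv α).deriv
  have hNdiff : Differentiable ℝ N := fun α => (hNderiv α).differentiableAt
  -- minimization
  have hmin : ∀ α : ℝ, 0 ≤ α → N αs ≤ N α := by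
    intro α hα
    rcases le_or_gt α αs with hcase | hcase
    · have hanti : AntitoneOn N (Set.Icc 0 αs) := by
        refine antitoneOn_of_deriv_nonpos (convex_Icc _ _) hNdiff.continuous.continuousOn
          (fun x _ => (hNdiff x).differentiableWithinAt) ?_
        intro x hx
        rw [interior_Icc] at hx
        rw [hNderiv']
        have : F x < F αs := Fmono hx.2
        rw [hFαs] at this
        linarith
      exact hanti ⟨hα, hcase⟩ ⟨hαs_pos.le, le_refl _⟩ hcase
    · have hmono : MonotoneOn N (Set.Ici αs) := by
        refine monotoneOn_of_deriv_nonneg (convex_Ici _) hNdiff.continuous.continuousOn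
          (fun x _ => (hNdiff x).differentiableWithinAt) ?_
        intro x hx
        rw [interior_Ici] at hx
        rw [hNderiv']
        have : F αs < F x := Fmono hx
        rw [hFαs] at this
        linarith
      exact hmono (Set.self_mem_Ici) (Set.mem_Ici.2 hcase.le) hcase.le
  refine ⟨αs, ⟨hαs_pos, hFαs, fun α hα => ?_⟩, ?_⟩
  · rw [hNLLeq, hNLLeq]
    exact hmin α hα
  · rintro y ⟨hy0, hyF, -⟩
    exact Fmono.injective (hyF.trans hFαs.symm)
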